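/- Let m ≥ 2, let t ≥ 1, and let φ be an automorphism of the generalized Mycielskian μ_t(K_{1,m}) with root w. Then φ(w) ∈ {w, u₀^t}, where u₀^t is the top-level shadow vertex of the unique vertex of maximum degree in K_{1,m}. -/

import Mathlib

open SimpleGraph

universe u

/-- A distinguishing edge coloring: no nontrivial automorphism preserves the coloring. -/
def IsDistEdgeColoring {V : Type u} (G : SimpleGraph V) {C : Type*} (c : G.edgeSet → C) : Prop :=
  ∀ φ : G ≃g G, (∀ e : G.edgeSet, c (φ.mapEdgeSet e) = c e) → ∀ v, φ v = v

/-- The distinguishing index: least number of colors in a distinguishing edge coloring. -/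
noncomputable def distIndex {V : Type u} (G : SimpleGraph V) : ℕ :=
  sInf {k : ℕ | ∃ c : G.edgeSet → Fin k, IsDistEdgeColoring G c}

/-- The star `K_{1,m}` with center `0`. -/
def starGraph (m : ℕ) : SimpleGraph (Fin (m + 1)) :=
  SimpleGraph.fromRel fun a _ => a = 0

/-- The Mycielskian: `Sum.inl a` are original vertices, `Sum.inr (Sum.inl a)` their
shadows, and `Sum.inr (Sum.inr _)` the root. -/
def myc {V : Type u} (G : SimpleGraph V) : SimpleGraph (V ⊕ V ⊕ PUnit.{u+1}) :=
  SimpleGraph.fromRel fun x y =>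
    match x, y with
    | Sum.inl a, Sum.inl b => G.Adj a b
    | Sum.inl a, Sum.inr (Sum.inl b) => G.Adj a b
    | Sum.inr (Sum.inl _), Sum.inr (Sum.inr _) => True
    | _, _ => False

/-- The generalized Mycielskian with `t` extra levels: `Sum.inl (j, a)` is the level-`j`
copy of vertex `a` (level `0` being the original vertices), and `Sum.inr _` is the root. -/
def genMyc {V : Type u} (G : SimpleGraph V) (t : ℕ) :
    SimpleGraph ((Fin (t + 1) × V) ⊕ PUnit.{u+1}) :=
  SimpleGraph.fromRel fun x y =>
    match x, y with
    | Sum.inl (j, a), Sum.inl (k, b) =>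
        ((j.val = 0 ∧ k.val = 0) ∨ k.val = j.val + 1) ∧ G.Adj a b
    | Sum.inl (j, _), Sum.inr _ => j.val = t
    | _, _ => False

section Helpers

variable (m t : ℕ)

private abbrev MV (m t : ℕ) := (Fin (t + 1) × Fin (m + 1)) ⊕ PUnit.{1}

private lemma ncard_neighborSet_root (_ht : 1 ≤ t) :
    ((genMyc (_root_.starGraph m) t).neighborSet (Sum.inr PUnit.unit)).ncard = m + 1 := by
  have hset : (genMyc (_root_.starGraph m) t).neighborSet (Sum.inr PUnit.unit)
      = Set.range (fun a : Fin (m + 1) => (Sum.inl (Fin.last t, a) : MV m t)) := by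
    ext x
    cases x with
    | inl p =>
      obtain ⟨j, a⟩ := p
      simp [genMyc, _root_.starGraph, Fin.ext_iff, eq_comm, -Fin.val_eq_zero_iff]
    | inr u => simp [genMyc]
  rw [hset, ← Nat.card_coe_set_eq,
    Nat.card_range_of_injective (f := fun a : Fin (m + 1) => (Sum.inl (Fin.last t, a) : MV m t))
      (by intro a b h; simpa using h),
    Nat.card_eq_fintype_card, Fintype.card_fin]

private lemma center_low_level (hm : 2 ≤ m) (j : Fin (t + 1)) (hj : j.val < t) :
    ((genMyc (_root_.starGraph m) t).neighborSet (Sum.inl (j, 0))).ncard ≠ m + 1 := by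
  set f : Fin m → MV m t := fun b => Sum.inl (⟨j.val + 1, by omega⟩, b.succ) with hf
  set g : Fin m → MV m t := fun b => Sum.inl (⟨j.val - 1, by have := j.isLt; omega⟩, b.succ) with hg
  have hfs : Set.range f ⊆ (genMyc (_root_.starGraph m) t).neighborSet (Sum.inl (j, 0)) := by
    rintro x ⟨b, rfl⟩
    simp only [SimpleGraph.mem_neighborSet, hf]
    simp [genMyc, _root_.starGraph, Fin.ext_iff, -Fin.val_eq_zero_iff]
  have hgs : Set.range g ⊆ (genMyc (_root_.starGraph m) t).neighborSet (Sum.inl (j, 0)) := by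
    rintro x ⟨b, rfl⟩
    simp only [SimpleGraph.mem_neighborSet, hg]
    simp [genMyc, _root_.starGraph, Fin.ext_iff, -Fin.val_eq_zero_iff]
    try omega
  have hdisj : Disjoint (Set.range f) (Set.range g) := by
    rw [Set.disjoint_left]
    rintro x ⟨b, rfl⟩ ⟨c, hc⟩
    simp [hf, hg, Fin.ext_iff] at hc
    try omega
  have hcf : (Set.range f).ncard = m := by
    rw [← Nat.card_coe_set_eq,
      Nat.card_range_of_injective (by intro a b h; simpa [hf] using h),
      Nat.card_eq_fintype_card, Fintype.card_fin]
  have hcg : (Set.range g).ncard = m := by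
    rw [← Nat.card_coe_set_eq,
      Nat.card_range_of_injective (by intro a b h; simpa [hg] using h),
      Nat.card_eq_fintype_card, Fintype.card_fin]
  have hle : (Set.range f ∪ Set.range g).ncard
      ≤ ((genMyc (_root_.starGraph m) t).neighborSet (Sum.inl (j, 0))).ncard :=
    Set.ncard_le_ncard (Set.union_subset hfs hgs) (Set.toFinite _)
  rw [Set.ncard_union_eq hdisj (Set.toFinite _) (Set.toFinite _), hcf, hcg] at hle
  omega

private lemma leaf_level (hm : 2 ≤ m) (ht : 1 ≤ t) (j : Fin (t + 1)) (a : Fin (m + 1))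
    (ha : a ≠ 0) :
    ((genMyc (_root_.starGraph m) t).neighborSet (Sum.inl (j, a))).ncard ≠ m + 1 := by
  set P : MV m t := Sum.inl (⟨j.val - 1, by have := j.isLt; omega⟩, 0) with hP
  set Q : MV m t := if h : j.val = t then Sum.inr PUnit.unit
    else Sum.inl (⟨j.val + 1, by have := j.isLt; omega⟩, 0) with hQ
  have hsub : (genMyc (_root_.starGraph m) t).neighborSet (Sum.inl (j, a)) ⊆ {P, Q} := by
    intro x hx
    cases x with
    | inl p =>
      obtain ⟨k, b⟩ := p
      simp only [SimpleGraph.mem_neighborSet] at hx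
      simp only [genMyc, _root_.starGraph, SimpleGraph.fromRel_adj] at hx
      obtain ⟨hne, hx⟩ := hx
      have hb : b = 0 ∧ (k.val = j.val + 1 ∨ j.val = k.val + 1 ∨ (j.val = 0 ∧ k.val = 0)) := by
        rcases hx with ⟨hlev, hne', hor⟩ | ⟨hlev, hne', hor⟩ <;>
          rcases hor with h0 | h0 <;>
          first
            | exact absurd h0 ha
            | exact ⟨h0, by tauto⟩
      obtain ⟨rfl, hlev⟩ := hb
      rcases hlev with h | h | ⟨h1, h2⟩
      · -- k = j + 1, so j.val < t, Q is the inl branch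
        have hjt : j.val ≠ t := by have := k.isLt; omega
        right
        rw [hQ, dif_neg hjt]
        simp [Fin.ext_iff]
        omega
      · left
        rw [hP]
        simp [Fin.ext_iff]
        omega
      · left
        rw [hP]
        simp [Fin.ext_iff]
        omega
    | inr u =>
      simp only [SimpleGraph.mem_neighborSet] at hx
      simp only [genMyc, _root_.starGraph, SimpleGraph.fromRel_adj] at hx
      have hjt : j.val = t := by tauto
      right
      cases u
      rw [hQ, dif_pos hjt]
      rfl
  have hle : ((genMyc (_root_.starGraph m) t).neighborSet (Sum.inl (j, a))).ncard ≤ 2 := by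
    calc ((genMyc (_root_.starGraph m) t).neighborSet (Sum.inl (j, a))).ncard
        ≤ ({P, Q} : Set (MV m t)).ncard := Set.ncard_le_ncard hsub (Set.toFinite _)
      _ ≤ ({Q} : Set (MV m t)).ncard + 1 := Set.ncard_insert_le _ _
      _ = 2 := by rw [Set.ncard_singleton]
  omega

end Helpers

theorem genMyc_star_root_image (m t : ℕ) (hm : 2 ≤ m) (ht : 1 ≤ t)
    (φ : genMyc (_root_.starGraph m) t ≃g genMyc (_root_.starGraph m) t) :
    φ (Sum.inr PUnit.unit) = Sum.inr PUnit.unit ∨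
      φ (Sum.inr PUnit.unit) = Sum.inl (Fin.last t, 0) := by
  classical
  have hcard : ((genMyc (_root_.starGraph m) t).neighborSet (φ (Sum.inr PUnit.unit))).ncard
      = ((genMyc (_root_.starGraph m) t).neighborSet (Sum.inr PUnit.unit)).ncard := by
    rw [← Nat.card_coe_set_eq, ← Nat.card_coe_set_eq]
    exact Nat.card_congr (φ.mapNeighborSet _).symm
  rw [ncard_neighborSet_root m t ht] at hcard
  cases hx : φ (Sum.inr PUnit.unit) with
  | inr u => left; cases u; rfl
  | inl p =>
    obtain ⟨j, a⟩ := p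
    rw [hx] at hcard
    by_cases ha : a = 0
    · subst ha
      by_cases hj : j.val = t
      · right
        congr 1
        exact congrArg (·, (0 : Fin (m+1))) (Fin.ext (by simpa using hj))
      · exact absurd hcard (center_low_level m t hm j (by have := j.isLt; omega))
    · exact absurd hcard (leaf_level m t hm ht j a ha)
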